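/- Let S = {s_1, ..., s_m} ⊂ ℝ^d, t ∈ (0,1], σ_t = 1 − (1 − σ_min)t, h = σ_t/t, and let u_t^S be the exact marginal velocity field induced by the empirical measure on S under the Gaussian OT path. Then for all x̃ ∈ ℝ^d, u_t^S(t·x̃) = x̃ + (m_h(x̃; S) − x̃)/σ_t, where m_h(x̃; S) is the Nadaraya–Watson local mean of S with Gaussian kernel at bandwidth h evaluated at x̃. -/

import Mathlib

noncomputable def gaussianPhi (d : ℕ) (h : ℝ) (z : EuclideanSpace ℝ (Fin d)) : ℝ :=
  (2 * Real.pi * h ^ 2) ^ (-(d : ℝ) / 2) * Real.exp (-‖z‖ ^ 2 / (2 * h ^ 2))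

/-- Exact empirical OT-FM velocity field is a Nadaraya–Watson smoother:
`u_t^S(t·x̃) = x̃ + (m_h(x̃; S) − x̃)/σ_t` with bandwidth `h = σ_t/t`. -/
theorem empirical_velocity_is_NW (d m : ℕ) (hm : 0 < m)
    (s : Fin m → EuclideanSpace ℝ (Fin d))
    (σmin : ℝ) (hσmin : 0 < σmin) (hσmin1 : σmin ≤ 1)
    (t : ℝ) (ht : 0 < t) (ht1 : t ≤ 1)
    (σt h : ℝ) (hσt : σt = 1 - (1 - σmin) * t) (hh : h = σt / t)
    (p : EuclideanSpace ℝ (Fin d) → ℝ)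
    (hp : ∀ x, p x = (1 / m) * ∑ i, gaussianPhi d σt (x - t • s i))
    (u : EuclideanSpace ℝ (Fin d) → EuclideanSpace ℝ (Fin d))
    (hu : ∀ x, u x = t⁻¹ • x + (σt / t) • gradient (fun y => Real.log (p y)) x)
    (w : Fin m → EuclideanSpace ℝ (Fin d) → ℝ)
    (hw : ∀ i x, w i x = gaussianPhi d h (x - s i) / ∑ j, gaussianPhi d h (x - s j))
    (mh : EuclideanSpace ℝ (Fin d) → EuclideanSpace ℝ (Fin d))
    (hmh : ∀ x, mh x = ∑ i, w i x • s i) :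
    ∀ xt : EuclideanSpace ℝ (Fin d),
      u (t • xt) = xt + σt⁻¹ • (mh xt - xt) := by
  intro xt
  have ht0 : t ≠ 0 := ne_of_gt ht
  have hσt0 : 0 < σt := by rw [hσt]; nlinarith
  have hσtne : σt ≠ 0 := ne_of_gt hσt0
  have hhpos : 0 < h := by rw [hh]; positivity
  have hhne : h ≠ 0 := ne_of_gt hhpos
  have hmne : (m : ℝ) ≠ 0 := Nat.cast_ne_zero.mpr hm.ne'
  set Cσ : ℝ := (2 * Real.pi * σt ^ 2) ^ (-(d : ℝ) / 2) with hCσ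
  have hCσpos : 0 < Cσ := Real.rpow_pos_of_pos (by positivity) _
  set a : ℝ := -(1 / (2 * σt ^ 2)) with ha
  set x : EuclideanSpace ℝ (Fin d) := t • xt with hx
  set E : Fin m → ℝ := fun i => Real.exp (-‖xt - s i‖ ^ 2 / (2 * h ^ 2)) with hE
  have hEpos : ∀ i, 0 < E i := fun i => Real.exp_pos _
  set S : ℝ := ∑ j, E j with hS
  have hSpos : 0 < S := Finset.sum_pos (fun i _ => hEpos i)
    (Finset.univ_nonempty_iff.mpr (Fin.pos_iff_nonempty.mp hm))
  have hSne : S ≠ 0 := ne_of_gt hSpos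
  have hxc : ∀ i, x - t • s i = t • (xt - s i) := fun i => by
    rw [hx, smul_sub]
  have hexp : ∀ i, a * ‖x - t • s i‖ ^ 2 = -‖xt - s i‖ ^ 2 / (2 * h ^ 2) := by
    intro i
    rw [hxc i, norm_smul, Real.norm_eq_abs, abs_of_pos ht, mul_pow, ha, hh]
    field_simp
  have hgauss : ∀ i, gaussianPhi d σt (x - t • s i) = Cσ * E i := by
    intro i
    have : gaussianPhi d σt (x - t • s i)
        = Cσ * Real.exp (a * ‖x - t • s i‖ ^ 2) := by
      rw [gaussianPhi, hCσ]
      congr 1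
      rw [ha]; ring
    rw [this, hexp i, hE]
  have hpx : p x = (m : ℝ)⁻¹ * (Cσ * S) := by
    rw [hp]
    simp only [hgauss]
    rw [← Finset.mul_sum, one_div, hS]
  have hpxpos : 0 < p x := by
    rw [hpx]
    have : (0 : ℝ) < (m : ℝ) := by exact_mod_cast hm
    positivity
  have hpxne : p x ≠ 0 := ne_of_gt hpxpos
  -- derivative of each Gaussian term
  have key : ∀ i : Fin m, HasFDerivAt (fun y => gaussianPhi d σt (y - t • s i))
      ((Cσ * E i * (2 * a)) • innerSL ℝ (x - t • s i)) x := by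
    intro i
    have h1 : HasFDerivAt (fun y : EuclideanSpace ℝ (Fin d) => y - t • s i)
        (ContinuousLinearMap.id ℝ (EuclideanSpace ℝ (Fin d))) x :=
      (hasFDerivAt_id x).sub_const _
    have h3 := ((h1.norm_sq.const_mul a).exp).const_mul Cσ
    have hfun : (fun y : EuclideanSpace ℝ (Fin d) => gaussianPhi d σt (y - t • s i))
        = fun y => Cσ * Real.exp (a * ‖y - t • s i‖ ^ 2) := by
      funext y
      rw [gaussianPhi, hCσ]
      congr 1
      rw [ha]; ring
    rw [hfun]
    refine h3.congr_fderiv ?_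
    have hEe : Real.exp (a * ‖x - t • s i‖ ^ 2) = E i := by rw [hexp i, hE]
    ext v
    simp only [ContinuousLinearMap.smul_apply, ContinuousLinearMap.coe_smul',
      Pi.smul_apply, ContinuousLinearMap.coe_comp', Function.comp_apply,
      ContinuousLinearMap.coe_id', id_eq, innerSL_apply_apply, smul_eq_mul, hEe]
    ring
  have hpd : HasFDerivAt p
      ((m : ℝ)⁻¹ • ∑ i, (Cσ * E i * (2 * a)) • innerSL ℝ (x - t • s i)) x := by
    have hsum : HasFDerivAt (fun y => ∑ i, gaussianPhi d σt (y - t • s i))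
        (∑ i, (Cσ * E i * (2 * a)) • innerSL ℝ (x - t • s i)) x :=
      HasFDerivAt.fun_sum (fun i _ => key i)
    have h2 := hsum.const_mul ((m : ℝ)⁻¹)
    have hpfun : p = fun y => (m : ℝ)⁻¹ * ∑ i, gaussianPhi d σt (y - t • s i) := by
      funext y; rw [hp y, one_div]
    rw [hpfun]
    exact h2
  have hlog := hpd.log hpxne
  have hgrad : gradient (fun y => Real.log (p y)) x
      = (p x)⁻¹ • ((m : ℝ)⁻¹ • ∑ i, (Cσ * E i * (2 * a)) • (x - t • s i)) := by
    apply HasGradientAt.gradient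
    rw [hasGradientAt_iff_hasFDerivAt]
    refine hlog.congr_fderiv ?_
    ext v
    simp only [InnerProductSpace.toDual_apply_apply, ContinuousLinearMap.smul_apply,
      ContinuousLinearMap.sum_apply, innerSL_apply_apply, smul_eq_mul,
      real_inner_smul_left, sum_inner]
  have hw' : ∀ i, w i xt = E i / S := by
    intro i
    rw [hw]
    have hg : ∀ j, gaussianPhi d h (xt - s j)
        = (2 * Real.pi * h ^ 2) ^ (-(d : ℝ) / 2) * E j := fun j => by
      rw [gaussianPhi, hE]
    simp only [hg]
    rw [← Finset.mul_sum, hS,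
      mul_div_mul_left _ _ (ne_of_gt (Real.rpow_pos_of_pos (by positivity) _))]
  have hsum1 : ∑ i, E i / S = 1 := by
    rw [← Finset.sum_div, ← hS, div_self hSne]
  rw [hu, hgrad, hmh]
  simp only [hw', hxc]
  have hfirst : t⁻¹ • x = xt := by
    rw [hx, smul_smul, inv_mul_cancel₀ ht0, one_smul]
  rw [hfirst]
  congr 1
  rw [smul_smul, smul_smul, Finset.smul_sum]
  simp only [smul_smul]
  have hxt1 : xt = ∑ i, (E i / S) • xt := by
    rw [← Finset.sum_smul, hsum1, one_smul]
  conv_rhs => rw [hxt1]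
  rw [← Finset.sum_sub_distrib, Finset.smul_sum]
  apply Finset.sum_congr rfl
  intro i _
  rw [← smul_sub, smul_smul,
    show s i - xt = -(xt - s i) from (neg_sub _ _).symm, smul_neg, ← neg_smul]
  congr 1
  rw [hpx, ha]
  field_simp
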